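/- arXiv:2603.23444 — 2 statements merged into one kernel-verified Lean document; each statement's English description precedes it below -/
import Mathlib

section
/- Under the hypotheses of the projected overlap bound, suppose additionally that H_P is a positive semidefinite Hermitian operator whose kernel is exactly the range of Π_S, whose smallest positive eigenvalue is at least λ2 > 0, and whose largest eigenvalue is at most λ_P. Set p = ⟨ψ|H_P|ψ⟩. If S1⊤ < S1, then |⟨ψ|E0⟩|² ≥ (S1 − E)/(S1 − E0) − (p/λ2)·(S1 − S1⊤)/(S1 − E0); otherwise |⟨ψ|E0⟩|² ≥ (S1 − E)/(S1 − E0) − (p/λ_P)·(S1 − S1⊤)/(S1 − E0). -/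
open scoped ComplexOrder

open Matrix

namespace Stmt2Aux

lemma herm_dot {n : ℕ} {A : Matrix (Fin n) (Fin n) ℂ} (hA : A.IsHermitian)
    (v w : Fin n → ℂ) : star v ⬝ᵥ A.mulVec w = star (A.mulVec v) ⬝ᵥ w := by
  rw [dotProduct_mulVec, star_mulVec, hA.eq]

lemma dot_self_eq {n : ℕ} (v : Fin n → ℂ) :
    star v ⬝ᵥ v = ((∑ i, Complex.normSq (v i) : ℝ) : ℂ) := by
  simp [dotProduct, Complex.normSq_eq_conj_mul_self]

lemma dot_self_re_nonneg {n : ℕ} (v : Fin n → ℂ) : 0 ≤ (star v ⬝ᵥ v).re := by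
  rw [dot_self_eq]
  exact_mod_cast Finset.sum_nonneg fun i _ => Complex.normSq_nonneg _

lemma dot_self_re_pos {n : ℕ} {v : Fin n → ℂ} (hv : v ≠ 0) : 0 < (star v ⬝ᵥ v).re := by
  rcases (dot_self_re_nonneg v).lt_or_eq with h | h
  · exact h
  · exfalso
    apply hv
    have h2 : star v ⬝ᵥ v = 0 := by
      rw [dot_self_eq] at h ⊢
      simp only [Complex.ofReal_re] at h
      exact_mod_cast h.symm
    exact dotProduct_star_self_eq_zero.mp h2

end Stmt2Aux

namespace Stmt2Aux

open scoped InnerProductSpace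

lemma quad_bounds {n : ℕ} (A : Matrix (Fin n) (Fin n) ℂ) (hA : A.IsHermitian)
    (lam2 lamP : ℝ)
    (hmin : ∀ (μ : ℝ) (v : Fin n → ℂ), v ≠ 0 → A.mulVec v = (μ : ℂ) • v → μ = 0 ∨ lam2 ≤ μ)
    (hmax : ∀ (μ : ℝ) (v : Fin n → ℂ), v ≠ 0 → A.mulVec v = (μ : ℂ) • v → μ ≤ lamP)
    (u : Fin n → ℂ) (horth : ∀ v : Fin n → ℂ, A.mulVec v = 0 → star v ⬝ᵥ u = 0) :
    lam2 * (star u ⬝ᵥ u).re ≤ (star u ⬝ᵥ A.mulVec u).re ∧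
      (star u ⬝ᵥ A.mulVec u).re ≤ lamP * (star u ⬝ᵥ u).re := by
  classical
  set b := hA.eigenvectorBasis with hb
  set μ := hA.eigenvalues with hμ
  -- eigen equation with complex scalar
  have heig : ∀ i, A.mulVec ⇑(b i) = ((μ i : ℂ)) • ⇑(b i) := by
    intro i
    have := hA.mulVec_eigenvectorBasis i
    rw [this]
    funext j
    simp [Complex.real_smul]
    rfl
  have hbne : ∀ i, (⇑(b i) : Fin n → ℂ) ≠ 0 := by
    intro i hzero
    have := b.orthonormal.ne_zero i
    apply this
    ext j
    exact congrFun hzero j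
  -- coefficients
  set U : EuclideanSpace ℂ (Fin n) := (WithLp.equiv 2 _).symm u with hU
  set AU : EuclideanSpace ℂ (Fin n) := (WithLp.equiv 2 _).symm (A.mulVec u) with hAU
  set c : Fin n → ℂ := fun i => b.repr U i with hc
  have hci : ∀ i, c i = star ⇑(b i) ⬝ᵥ u := by
    intro i
    rw [hc]
    simp only [b.repr_apply_apply]
    exact dotProduct_comm _ _
  have hcAU : ∀ i, b.repr AU i = (μ i : ℂ) * c i := by
    intro i
    rw [b.repr_apply_apply]
    have : (inner ℂ (b i) AU : ℂ) = star ⇑(b i) ⬝ᵥ A.mulVec u := dotProduct_comm _ _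
    rw [this, herm_dot hA, heig i]
    rw [star_smul, smul_dotProduct, smul_eq_mul, hci i]
    simp [Complex.conj_ofReal]
  -- zero eigenvalue components vanish
  have hzero : ∀ i, μ i = 0 → c i = 0 := by
    intro i hi
    rw [hci i]
    apply horth
    rw [heig i, hi]
    simp
  -- Parseval-type identities
  have hnorm : (star u ⬝ᵥ u) = ∑ i, (starRingEnd ℂ) (c i) * c i := by
    have h1 : (inner ℂ U U : ℂ) = star u ⬝ᵥ u := dotProduct_comm _ _
    have h2 : (inner ℂ U U : ℂ) = inner ℂ (b.repr U) (b.repr U) := (b.repr.inner_map_map U U).symm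
    rw [← h1, h2, PiLp.inner_apply]
    simp only [RCLike.inner_apply']
    rfl
  have hform : (star u ⬝ᵥ A.mulVec u) = ∑ i, (μ i : ℂ) * ((starRingEnd ℂ) (c i) * c i) := by
    have h1 : (inner ℂ U AU : ℂ) = star u ⬝ᵥ A.mulVec u := dotProduct_comm _ _
    have h2 : (inner ℂ U AU : ℂ) = inner ℂ (b.repr U) (b.repr AU) := (b.repr.inner_map_map U AU).symm
    rw [← h1, h2, PiLp.inner_apply]
    simp only [RCLike.inner_apply']
    refine Finset.sum_congr rfl (fun i _ => ?_)
    have hr : b.repr U i = c i := rfl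
    rw [hr, hcAU i]
    ring
  -- real versions
  have hnr : (star u ⬝ᵥ u).re = ∑ i, Complex.normSq (c i) := by
    rw [hnorm]
    have : ∀ i ∈ Finset.univ, (starRingEnd ℂ) (c i) * c i = ((Complex.normSq (c i) : ℝ) : ℂ) :=
      fun i _ => Complex.normSq_eq_conj_mul_self.symm
    rw [Finset.sum_congr rfl this, ← Complex.ofReal_sum]
    simp
  have hfr : (star u ⬝ᵥ A.mulVec u).re = ∑ i, μ i * Complex.normSq (c i) := by
    rw [hform]
    have : ∀ i, (μ i : ℂ) * ((starRingEnd ℂ) (c i) * c i)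
        = ((μ i * Complex.normSq (c i) : ℝ) : ℂ) := by
      intro i
      rw [← Complex.normSq_eq_conj_mul_self]
      push_cast
      ring
    rw [Finset.sum_congr rfl (fun i _ => this i), ← Complex.ofReal_sum]
    simp
  rw [hnr, hfr]
  constructor
  · rw [Finset.mul_sum]
    apply Finset.sum_le_sum
    intro i _
    rcases hmin (μ i) ⇑(b i) (hbne i) (heig i) with h0 | hle
    · rw [hzero i h0, h0]; simp
    · exact mul_le_mul_of_nonneg_right hle (Complex.normSq_nonneg _)
  · rw [Finset.mul_sum]
    apply Finset.sum_le_sum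
    intro i _
    exact mul_le_mul_of_nonneg_right (hmax (μ i) ⇑(b i) (hbne i) (heig i))
      (Complex.normSq_nonneg _)

end Stmt2Aux

namespace Stmt2Aux

lemma var_lb {n : ℕ} (H : Matrix (Fin n) (Fin n) ℂ) (S : ℝ) (C : (Fin n → ℂ) → Prop)
    (hlb : ∀ φ, star φ ⬝ᵥ φ = 1 → C φ → S ≤ (star φ ⬝ᵥ H.mulVec φ).re)
    (y : Fin n → ℂ) (hCs : ∀ c : ℂ, C (c • y)) :
    S * (star y ⬝ᵥ y).re ≤ (star y ⬝ᵥ H.mulVec y).re := by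
  rcases eq_or_ne y 0 with rfl | hy
  · simp
  · set t : ℝ := (star y ⬝ᵥ y).re with ht
    have htpos : 0 < t := dot_self_re_pos hy
    have hyc : star y ⬝ᵥ y = (t : ℂ) := by
      have hsum : t = ∑ i, Complex.normSq (y i) := by rw [ht, dot_self_eq]; simp
      rw [dot_self_eq, hsum]
    set s : ℝ := (Real.sqrt t)⁻¹ with hs
    have hsq : Real.sqrt t * Real.sqrt t = t := Real.mul_self_sqrt htpos.le
    have hs0 : Real.sqrt t ≠ 0 := ne_of_gt (Real.sqrt_pos.mpr htpos)
    have hst : s * s * t = 1 := by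
      rw [hs]
      field_simp
      rw [Real.sq_sqrt htpos.le]
    have hφn : star ((s : ℂ) • y) ⬝ᵥ ((s : ℂ) • y) = 1 := by
      rw [star_smul, smul_dotProduct, dotProduct_smul, hyc]
      simp only [smul_eq_mul, Complex.star_def, Complex.conj_ofReal]
      rw [← Complex.ofReal_mul, ← Complex.ofReal_mul, ← Complex.ofReal_one]
      norm_cast
      linarith [hst]
    have hlbφ := hlb ((s : ℂ) • y) hφn (hCs (s : ℂ))
    have hform : (star ((s : ℂ) • y) ⬝ᵥ H.mulVec ((s : ℂ) • y)).re
        = (s * s) * (star y ⬝ᵥ H.mulVec y).re := by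
      rw [mulVec_smul, star_smul, smul_dotProduct, dotProduct_smul]
      simp only [smul_eq_mul, Complex.star_def, Complex.conj_ofReal, ← mul_assoc,
        ← Complex.ofReal_mul]
      simp [Complex.mul_re]
    rw [hform] at hlbφ
    have hss : s * s = t⁻¹ := by rw [hs, ← mul_inv, hsq]
    rw [hss, inv_mul_eq_div] at hlbφ
    exact (le_div_iff₀ htpos).mp hlbφ

end Stmt2Aux


open Stmt2Aux

/-- Theorem 3 (penalty-based overlap bound): same setting as the projected overlap bound,
with additionally a positive semidefinite penalty operator `HP` whose kernel is exactly the
range of `P`, whose smallest positive eigenvalue is at least `lam2 > 0` and whose spectrum is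
bounded above by `lamP`. With `p = ⟨ψ|HP|ψ⟩`: if `S1t < S1` then
`|⟨ψ|E0⟩|² ≥ (S1 − E)/(S1 − E0) − (p/lam2)(S1 − S1t)/(S1 − E0)`, otherwise
`|⟨ψ|E0⟩|² ≥ (S1 − E)/(S1 − E0) − (p/lamP)(S1 − S1t)/(S1 − E0)`. -/
theorem stmt2 {n : ℕ} (H P : Matrix (Fin n) (Fin n) ℂ)
    (hH : H.IsHermitian) (hP : P.IsHermitian) (hProj : P * P = P)
    (hcomm : H * P = P * H)
    (E0 S1 S1t : ℝ) (ψ0 : Fin n → ℂ)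
    (hψ0norm : star ψ0 ⬝ᵥ ψ0 = 1)
    (hψ0P : P.mulVec ψ0 = ψ0)
    (heig : H.mulVec ψ0 = (E0 : ℂ) • ψ0)
    (hS1lb : ∀ φ : Fin n → ℂ, star φ ⬝ᵥ φ = 1 → P.mulVec φ = φ → star ψ0 ⬝ᵥ φ = 0 →
      S1 ≤ (star φ ⬝ᵥ H.mulVec φ).re)
    (hS1att : ∃ φ : Fin n → ℂ, star φ ⬝ᵥ φ = 1 ∧ P.mulVec φ = φ ∧ star ψ0 ⬝ᵥ φ = 0 ∧
      (star φ ⬝ᵥ H.mulVec φ).re = S1)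
    (hS1tlb : ∀ φ : Fin n → ℂ, star φ ⬝ᵥ φ = 1 → P.mulVec φ = 0 →
      S1t ≤ (star φ ⬝ᵥ H.mulVec φ).re)
    (hS1tatt : ∃ φ : Fin n → ℂ, star φ ⬝ᵥ φ = 1 ∧ P.mulVec φ = 0 ∧
      (star φ ⬝ᵥ H.mulVec φ).re = S1t)
    (hE0S1 : E0 < S1)
    (ψ : Fin n → ℂ) (hψ : star ψ ⬝ᵥ ψ = 1)
    (E : ℝ) (hE : star ψ ⬝ᵥ H.mulVec ψ = (E : ℂ))
    (HP : Matrix (Fin n) (Fin n) ℂ) (hHPherm : HP.IsHermitian) (hHPpsd : HP.PosSemidef)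
    (hker : ∀ v : Fin n → ℂ, HP.mulVec v = 0 ↔ P.mulVec v = v)
    (lam2 lamP : ℝ) (hlam2pos : 0 < lam2)
    (hmin : ∀ (μ : ℝ) (v : Fin n → ℂ), v ≠ 0 → HP.mulVec v = (μ : ℂ) • v →
      μ = 0 ∨ lam2 ≤ μ)
    (hmax : ∀ (μ : ℝ) (v : Fin n → ℂ), v ≠ 0 → HP.mulVec v = (μ : ℂ) • v → μ ≤ lamP)
    (p : ℝ) (hp : star ψ ⬝ᵥ HP.mulVec ψ = (p : ℂ)) :
    (S1t < S1 →
      (S1 - E) / (S1 - E0) - (p / lam2) * ((S1 - S1t) / (S1 - E0))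
        ≤ ‖star ψ ⬝ᵥ ψ0‖ ^ 2) ∧
    (S1 ≤ S1t →
      (S1 - E) / (S1 - E0) - (p / lamP) * ((S1 - S1t) / (S1 - E0))
        ≤ ‖star ψ ⬝ᵥ ψ0‖ ^ 2) := by
  classical
  set a : ℂ := star ψ0 ⬝ᵥ ψ with ha
  set x : Fin n → ℂ := P.mulVec ψ with hx
  set u : Fin n → ℂ := ψ - x with hu
  set y : Fin n → ℂ := x - a • ψ0 with hy
  have hPx : P.mulVec x = x := by rw [hx, mulVec_mulVec, hProj]
  have hPu : P.mulVec u = 0 := by rw [hu, mulVec_sub, hPx, ← hx, sub_self]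
  have hPy : P.mulVec y = y := by rw [hy, mulVec_sub, hPx, mulVec_smul, hψ0P]
  have h5 : star ψ0 ⬝ᵥ x = a := by rw [hx, herm_dot hP, hψ0P, ← ha]
  have z1 : star ψ0 ⬝ᵥ y = 0 := by
    rw [hy, dotProduct_sub, h5, dotProduct_smul, smul_eq_mul, hψ0norm, mul_one, sub_self]
  have z2 : star ψ0 ⬝ᵥ u = 0 := by
    have h6 : star ψ0 ⬝ᵥ u = star (P.mulVec ψ0) ⬝ᵥ u := by rw [hψ0P]
    rw [h6, ← herm_dot hP, hPu, dotProduct_zero]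
  have z3 : star y ⬝ᵥ u = 0 := by
    have h6 : star y ⬝ᵥ u = star (P.mulVec y) ⬝ᵥ u := by rw [hPy]
    rw [h6, ← herm_dot hP, hPu, dotProduct_zero]
  have z4 : star y ⬝ᵥ ψ0 = 0 := by rw [star_dotProduct, z1, star_zero]
  have z5 : star u ⬝ᵥ ψ0 = 0 := by rw [star_dotProduct, z2, star_zero]
  have z6 : star u ⬝ᵥ y = 0 := by rw [star_dotProduct, z3, star_zero]
  have hPHu : P.mulVec (H.mulVec u) = 0 := by
    rw [mulVec_mulVec, ← hcomm, ← mulVec_mulVec, hPu, mulVec_zero]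
  have z7 : star ψ0 ⬝ᵥ H.mulVec y = 0 := by
    rw [herm_dot hH, heig, star_smul, smul_dotProduct, z1, smul_zero]
  have z8 : star ψ0 ⬝ᵥ H.mulVec u = 0 := by
    have h6 : star ψ0 ⬝ᵥ H.mulVec u = star (P.mulVec ψ0) ⬝ᵥ H.mulVec u := by rw [hψ0P]
    rw [h6, ← herm_dot hP, hPHu, dotProduct_zero]
  have z9 : star y ⬝ᵥ H.mulVec u = 0 := by
    have h6 : star y ⬝ᵥ H.mulVec u = star (P.mulVec y) ⬝ᵥ H.mulVec u := by rw [hPy]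
    rw [h6, ← herm_dot hP, hPHu, dotProduct_zero]
  have z10 : star u ⬝ᵥ H.mulVec y = 0 := by
    rw [herm_dot hH, star_dotProduct, z9, star_zero]
  have hdecomp : ψ = a • ψ0 + y + u := by rw [hy, hu]; abel
  set q : ℝ := Complex.normSq a with hq
  set ny : ℝ := (star y ⬝ᵥ y).re with hny
  set wu : ℝ := (star u ⬝ᵥ u).re with hwu
  set Ey : ℝ := (star y ⬝ᵥ H.mulVec y).re with hEy
  set Eu : ℝ := (star u ⬝ᵥ H.mulVec u).re with hEu
  -- norm identity
  have hnorm1 : (1 : ℝ) = q + ny + wu := by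
    have e1 : star ψ ⬝ᵥ ψ = star (a • ψ0 + y + u) ⬝ᵥ (a • ψ0 + y + u) := by rw [← hdecomp]
    rw [hψ] at e1
    simp only [star_add, star_smul, add_dotProduct, dotProduct_add, smul_dotProduct,
      dotProduct_smul, smul_eq_mul] at e1
    rw [hψ0norm, z1, z2, z3, z4, z5, z6] at e1
    simp only [mul_one, mul_zero, add_zero, zero_add] at e1
    have e2 : (1 : ℂ) = (q : ℂ) + (star y ⬝ᵥ y) + (star u ⬝ᵥ u) := by
      rw [e1, hq, Complex.normSq_eq_conj_mul_self]
      simp only [Complex.star_def]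
      ring
    have := congrArg Complex.re e2
    simpa [hny, hwu] using this
  -- energy identity
  have hEeq : E = q * E0 + Ey + Eu := by
    have hHd : H.mulVec (a • ψ0 + y + u) = (a * E0) • ψ0 + H.mulVec y + H.mulVec u := by
      rw [mulVec_add, mulVec_add, mulVec_smul, heig, smul_smul]
    have e1 : star ψ ⬝ᵥ H.mulVec ψ
        = star (a • ψ0 + y + u) ⬝ᵥ ((a * E0) • ψ0 + H.mulVec y + H.mulVec u) := by
      rw [← hHd, ← hdecomp]
    rw [hE] at e1
    simp only [star_add, star_smul, add_dotProduct, dotProduct_add, smul_dotProduct,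
      dotProduct_smul, smul_eq_mul] at e1
    rw [hψ0norm, z4, z5, z7, z8, z9, z10] at e1
    simp only [mul_one, mul_zero, add_zero, zero_add] at e1
    have e2 : (E : ℂ) = ((q * E0 : ℝ) : ℂ) + (star y ⬝ᵥ H.mulVec y) + (star u ⬝ᵥ H.mulVec u) := by
      rw [e1, hq, Complex.ofReal_mul, Complex.normSq_eq_conj_mul_self]
      simp only [Complex.star_def]
      ring
    have := congrArg Complex.re e2
    simpa [hEy, hEu] using this
  -- variational bounds
  have hB1 : S1 * ny ≤ Ey :=
    var_lb H S1 (fun φ => P.mulVec φ = φ ∧ star ψ0 ⬝ᵥ φ = 0)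
      (fun φ h1 h2 => hS1lb φ h1 h2.1 h2.2) y
      (fun c => ⟨by rw [mulVec_smul, hPy], by rw [dotProduct_smul, z1, smul_zero]⟩)
  have hB2 : S1t * wu ≤ Eu :=
    var_lb H S1t (fun φ => P.mulVec φ = 0) (fun φ h1 h2 => hS1tlb φ h1 h2) u
      (fun c => show P.mulVec (c • u) = 0 by rw [mulVec_smul, hPu, smul_zero])
  -- penalty
  have hHPx : HP.mulVec x = 0 := (hker x).mpr hPx
  have hψxu : ψ = x + u := by rw [hu]; abel
  have hpu : (p : ℂ) = star u ⬝ᵥ HP.mulVec u := by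
    have e1 : star ψ ⬝ᵥ HP.mulVec ψ = star (x + u) ⬝ᵥ HP.mulVec (x + u) := by rw [← hψxu]
    rw [hp, mulVec_add, hHPx, zero_add, star_add, add_dotProduct] at e1
    rw [herm_dot hHPherm x u, hHPx, star_zero, zero_dotProduct, zero_add] at e1
    exact e1
  have horthu : ∀ v : Fin n → ℂ, HP.mulVec v = 0 → star v ⬝ᵥ u = 0 := by
    intro v hv
    have hPv := (hker v).mp hv
    have h6 : star v ⬝ᵥ u = star (P.mulVec v) ⬝ᵥ u := by rw [hPv]
    rw [h6, ← herm_dot hP, hPu, dotProduct_zero]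
  have hquad := quad_bounds HP hHPherm lam2 lamP hmin hmax u horthu
  have hpre : (star u ⬝ᵥ HP.mulVec u).re = p := by rw [← hpu]; simp
  rw [hpre] at hquad
  have hql : lam2 * wu ≤ p := hquad.1
  have hqh : p ≤ lamP * wu := hquad.2
  -- lamP ≥ lam2 > 0
  obtain ⟨χ, hχn, hχP, -⟩ := hS1tatt
  have horthχ : ∀ v : Fin n → ℂ, HP.mulVec v = 0 → star v ⬝ᵥ χ = 0 := by
    intro v hv
    have hPv := (hker v).mp hv
    have h6 : star v ⬝ᵥ χ = star (P.mulVec v) ⬝ᵥ χ := by rw [hPv]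
    rw [h6, ← herm_dot hP, hχP, dotProduct_zero]
  have hquadχ := quad_bounds HP hHPherm lam2 lamP hmin hmax χ horthχ
  rw [hχn] at hquadχ
  simp only [Complex.one_re, mul_one] at hquadχ
  have hlamPpos : 0 < lamP := lt_of_lt_of_le hlam2pos (le_trans hquadχ.1 hquadχ.2)
  -- nonnegativity
  have hwunn : 0 ≤ wu := dot_self_re_nonneg u
  have hnynn : 0 ≤ ny := dot_self_re_nonneg y
  have hqnn : 0 ≤ q := Complex.normSq_nonneg a
  -- key inequality
  have hnyeq : ny = 1 - q - wu := by linarith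
  rw [hnyeq] at hB1
  have key : (S1 - E) - (S1 - S1t) * wu ≤ q * (S1 - E0) := by nlinarith [hB1, hB2, hEeq]
  have habs : ‖star ψ ⬝ᵥ ψ0‖ ^ 2 = q := by
    rw [star_dotProduct, ← ha, Complex.star_def, Complex.norm_conj, Complex.sq_norm]
  have hD : 0 < S1 - E0 := by linarith
  constructor
  · intro hlt
    rw [habs]
    have hw2 : wu ≤ p / lam2 := by rw [le_div_iff₀ hlam2pos, mul_comm]; exact hql
    have heq : (S1 - E) / (S1 - E0) - (p / lam2) * ((S1 - S1t) / (S1 - E0))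
        = ((S1 - E) - (p / lam2) * (S1 - S1t)) / (S1 - E0) := by ring
    rw [heq, div_le_iff₀ hD]
    have hmono : (S1 - S1t) * wu ≤ (S1 - S1t) * (p / lam2) :=
      mul_le_mul_of_nonneg_left hw2 (by linarith)
    linarith [key]
  · intro hle
    rw [habs]
    have hwP : p / lamP ≤ wu := by rw [div_le_iff₀ hlamPpos, mul_comm]; exact hqh
    have heq : (S1 - E) / (S1 - E0) - (p / lamP) * ((S1 - S1t) / (S1 - E0))
        = ((S1 - E) - (p / lamP) * (S1 - S1t)) / (S1 - E0) := by ring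
    rw [heq, div_le_iff₀ hD]
    have hmono : (S1 - S1t) * wu ≤ (S1 - S1t) * (p / lamP) :=
      mul_le_mul_of_nonpos_left hwP (by linarith)
    linarith [key]
end

section
/- Equivalence of Heisenberg and Schrödinger truncated propagation: fix a set S of monomial indices closed under the branching rules at cutoff ℓ. Define the truncated Heisenberg evolution of an observable H through a single gate U = exp(−iθM_γ/2) by keeping, for each anticommuting monomial, the branch i sin(θ) M_γ M_ν only if the resulting monomial lies in S, and the truncated Schrödinger evolution of a state ρ analogously with U replaced by U†. Then Tr[T_Schr(ρ) · H] = Tr[ρ · T_Heis(H)], where T_Heis and T_Schr are the truncated single-gate superoperators. -/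
/-- Hamming weight of a binary vector. -/
def majWeight {K : ℕ} (ν : Fin K → Bool) : ℕ :=
  (Finset.univ.filter (fun j => ν j = true)).card

/-- Inner product of binary vectors over the integers. -/
def majDot {K : ℕ} (ν μ : Fin K → Bool) : ℕ :=
  (Finset.univ.filter (fun j => ν j = true ∧ μ j = true)).card

/-- Index of the product monomial `M_γ M_ν` (bitwise xor). -/
def xorIdx {K : ℕ} (γ ν : Fin K → Bool) : Fin K → Bool := fun j => xor (γ j) (ν j)

/-- `M_γ` and `M_ν` anticommute iff `|γ||ν| − ⟨γ,ν⟩` is odd. -/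
def anticIdx {K : ℕ} (γ ν : Fin K → Bool) : Bool :=
  (majWeight γ * majWeight ν - majDot γ ν) % 2 == 1

/-- The Hermitian Majorana monomial
`M_ν = i^{|ν|(|ν|−1)/2} m_1^{ν_1} ⋯ m_K^{ν_K}` (ordered product). -/
noncomputable def MajMono {d K : ℕ} (m : Fin K → Matrix (Fin d) (Fin d) ℂ)
    (ν : Fin K → Bool) : Matrix (Fin d) (Fin d) ℂ :=
  (Complex.I ^ (majWeight ν * (majWeight ν - 1) / 2)) •
    ((List.finRange K).map (fun j => if ν j then m j else 1)).prod

/-- Truncated single-gate Heisenberg evolution of the monomial `M_ν` through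
`U = exp(−iθ M_γ/2)`, retaining the branch `i sin θ · M_γ M_ν` only if `γ⊕ν ∈ S`. -/
noncomputable def heisStep {d K : ℕ} (m : Fin K → Matrix (Fin d) (Fin d) ℂ)
    (γ : Fin K → Bool) (θ : ℝ) (S : Finset (Fin K → Bool)) (ν : Fin K → Bool) :
    Matrix (Fin d) (Fin d) ℂ :=
  if anticIdx γ ν then
    (Real.cos θ : ℂ) • MajMono m ν +
      (Complex.I * (Real.sin θ : ℂ) * (if xorIdx γ ν ∈ S then 1 else 0)) •
        (MajMono m γ * MajMono m ν)
  else MajMono m ν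

/-- Truncated single-gate Schrödinger evolution (same rule with `θ ↦ −θ`). -/
noncomputable def schrStep {d K : ℕ} (m : Fin K → Matrix (Fin d) (Fin d) ℂ)
    (γ : Fin K → Bool) (θ : ℝ) (S : Finset (Fin K → Bool)) (ν : Fin K → Bool) :
    Matrix (Fin d) (Fin d) ℂ :=
  if anticIdx γ ν then
    (Real.cos θ : ℂ) • MajMono m ν -
      (Complex.I * (Real.sin θ : ℂ) * (if xorIdx γ ν ∈ S then 1 else 0)) •
        (MajMono m γ * MajMono m ν)
  else MajMono m ν

namespace St19

/-- sign exponent for moving `m k` through the ordered product for `ν`. -/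
def eCount {K : ℕ} (ν : Fin K → Bool) (k : Fin K) : ℕ :=
  (Finset.univ.filter (fun j => ν j = true ∧ j ≠ k)).card



lemma weight_cast {K : ℕ} (ν : Fin K → Bool) :
    ((majWeight ν : ZMod 2)) = ∑ j, (if ν j = true then (1 : ZMod 2) else 0) := by
  rw [majWeight, Finset.card_filter]
  push_cast
  simp

lemma dot_cast {K : ℕ} (ν μ : Fin K → Bool) :
    ((majDot ν μ : ZMod 2)) = ∑ j, (if ν j = true ∧ μ j = true then (1 : ZMod 2) else 0) := by
  rw [majDot, Finset.card_filter]
  push_cast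
  simp

lemma eCount_cast {K : ℕ} (ν : Fin K → Bool) (k : Fin K) :
    ((eCount ν k : ZMod 2)) = (majWeight ν : ZMod 2) + (if ν k = true then 1 else 0) := by
  have key : majWeight ν = eCount ν k + (if ν k = true then 1 else 0) := by
    rw [majWeight, eCount, Finset.card_filter, Finset.card_filter]
    have h1 : ∀ j : Fin K, (if ν j = true then (1:ℕ) else 0) =
        (if ν j = true ∧ j ≠ k then 1 else 0) + (if j = k then (if ν j = true then 1 else 0) else 0) := by
      intro j
      by_cases hj : ν j = true <;> by_cases hk : j = k <;> simp [hj, hk]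
    calc (∑ j, if ν j = true then (1:ℕ) else 0)
        = ∑ j, ((if ν j = true ∧ j ≠ k then 1 else 0) +
            (if j = k then (if ν j = true then 1 else 0) else 0)) :=
          Finset.sum_congr rfl fun j _ => h1 j
      _ = (∑ j, if ν j = true ∧ j ≠ k then 1 else 0) +
            ∑ j, (if j = k then (if ν j = true then 1 else 0) else 0) := Finset.sum_add_distrib
      _ = (∑ j, if ν j = true ∧ j ≠ k then 1 else 0) + (if ν k = true then 1 else 0) := by
          rw [Finset.sum_ite_eq' Finset.univ k (fun j => if ν j = true then (1:ℕ) else 0)]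
          simp
  have hxx : ∀ x : ZMod 2, x + x = 0 := by decide
  have := congrArg (fun n : ℕ => (n : ZMod 2)) key
  push_cast at this
  rw [this]
  by_cases hk : ν k = true <;> simp [hk, hxx]
  rw [add_assoc, hxx, add_zero]

lemma weight_xor {K : ℕ} (γ ν : Fin K → Bool) :
    ((majWeight (xorIdx γ ν) : ZMod 2)) = (majWeight γ : ZMod 2) + (majWeight ν : ZMod 2) := by
  rw [weight_cast, weight_cast, weight_cast, ← Finset.sum_add_distrib]
  refine Finset.sum_congr rfl fun j _ => ?_
  simp only [xorIdx]
  rcases Bool.dichotomy (γ j) with hγ | hγ <;> rcases Bool.dichotomy (ν j) with hν | hν <;>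
    simp [hγ, hν]
  decide

lemma dot_xor {K : ℕ} (γ α β : Fin K → Bool) :
    ((majDot γ (xorIdx α β) : ZMod 2)) = (majDot γ α : ZMod 2) + (majDot γ β : ZMod 2) := by
  rw [dot_cast, dot_cast, dot_cast, ← Finset.sum_add_distrib]
  refine Finset.sum_congr rfl fun j _ => ?_
  simp only [xorIdx]
  rcases Bool.dichotomy (γ j) with hγ | hγ <;> rcases Bool.dichotomy (α j) with hα | hα <;>
    rcases Bool.dichotomy (β j) with hβ | hβ <;> simp [hγ, hα, hβ]
  decide

lemma dot_self {K : ℕ} (γ : Fin K → Bool) : majDot γ γ = majWeight γ := by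
  simp [majDot, majWeight]

lemma dot_le {K : ℕ} (γ ν : Fin K → Bool) : majDot γ ν ≤ majWeight γ * majWeight ν := by
  rcases Nat.eq_zero_or_pos (majWeight γ) with h | h
  · have : majDot γ ν = 0 := by
      refine Nat.le_zero.mp ?_
      calc majDot γ ν ≤ majWeight γ := Finset.card_le_card (by
        intro x hx; simp only [Finset.mem_filter, majDot] at hx ⊢
        exact ⟨hx.1, hx.2.1⟩)
      _ = 0 := h
    omega
  · calc majDot γ ν ≤ majWeight ν := Finset.card_le_card (by
        intro x hx; simp only [Finset.mem_filter, majDot] at hx ⊢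
        exact ⟨hx.1, hx.2.2⟩)
    _ ≤ majWeight γ * majWeight ν := Nat.le_mul_of_pos_left _ h

lemma zmod2_cases (x : ZMod 2) : x = 0 ∨ x = 1 := by
  have : ∀ y : ZMod 2, y = 0 ∨ y = 1 := by decide
  exact this x

lemma natCast_zmod2_one_iff (n : ℕ) : (n : ZMod 2) = 1 ↔ n % 2 = 1 := by
  constructor
  · intro hn
    rcases Nat.mod_two_eq_zero_or_one n with h | h
    · exfalso
      have : ((n % 2 : ℕ) : ZMod 2) = (n : ZMod 2) := ZMod.natCast_mod n 2
      rw [h] at this; simp at this; rw [hn] at this; exact one_ne_zero this.symm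
    · exact h
  · intro h
    have : ((n % 2 : ℕ) : ZMod 2) = (n : ZMod 2) := ZMod.natCast_mod n 2
    rw [h] at this; simpa using this.symm

lemma anticIdx_iff {K : ℕ} (γ ν : Fin K → Bool) :
    anticIdx γ ν = true ↔ ((majWeight γ * majWeight ν + majDot γ ν : ℕ) : ZMod 2) = 1 := by
  rw [anticIdx, beq_iff_eq, natCast_zmod2_one_iff]
  have := dot_le γ ν
  omega



/- ---- xorIdx generalities ---- -/

lemma xorIdx_eq_zero_iff {K : ℕ} (a b : Fin K → Bool) :
    xorIdx a b = (fun _ => false) ↔ a = b := by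
  constructor
  · intro hc
    funext j
    have := congrFun hc j
    simp only [xorIdx] at this
    rcases Bool.dichotomy (a j) with h | h <;> rcases Bool.dichotomy (b j) with h' | h' <;>
      simp_all
  · intro h; subst h; funext j; simp [xorIdx]

lemma xorIdx_cancel {K : ℕ} (γ μ : Fin K → Bool) : xorIdx γ (xorIdx γ μ) = μ := by
  funext j
  simp only [xorIdx]
  rcases Bool.dichotomy (γ j) with h | h <;> rcases Bool.dichotomy (μ j) with h' | h' <;>
    simp [h, h']

lemma xorIdx_assoc {K : ℕ} (a b c : Fin K → Bool) :
    xorIdx (xorIdx a b) c = xorIdx a (xorIdx b c) := by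
  funext j; simp [xorIdx, Bool.xor_assoc]


lemma ite_xor (a b : Bool) :
    (if (xor a b) = true then (1 : ZMod 2) else 0) =
      (if a = true then 1 else 0) + (if b = true then 1 else 0) := by
  rcases Bool.dichotomy a with h | h <;> rcases Bool.dichotomy b with h' | h' <;>
    simp [h, h'] <;> decide

lemma neg_one_pow_eq {n : ℕ} (h : (n : ZMod 2) = 1) : (-1 : ℂ) ^ n = -1 :=
  Odd.neg_one_pow (Nat.odd_iff.mpr ((natCast_zmod2_one_iff n).mp h))

lemma exists_odd {K : ℕ} (hK : (K : ZMod 2) = 0) (lam : Fin K → Bool)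
    (hlam : lam ≠ fun _ => false) :
    ∃ k, (majWeight lam : ZMod 2) + (if lam k = true then 1 else 0) = 1 := by
  rcases zmod2_cases ((majWeight lam : ZMod 2)) with h | h
  · have hex : ∃ k, lam k = true := by
      by_contra hc
      push_neg at hc
      exact hlam (funext fun k => by simpa using hc k)
    obtain ⟨k, hk⟩ := hex
    exact ⟨k, by rw [h, hk]; simp⟩
  · have hex : ∃ k, lam k = false := by
      by_contra hc
      push_neg at hc
      have hall : ∀ k, lam k = true := fun k => by
        rcases Bool.dichotomy (lam k) with h' | h'
        · exact absurd h' (hc k)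
        · exact h'
      have hw : majWeight lam = K := by
        rw [majWeight, Finset.filter_true_of_mem (fun x _ => hall x), Finset.card_univ,
          Fintype.card_fin]
      rw [hw, hK] at h
      exact absurd h.symm one_ne_zero
    obtain ⟨k, hk⟩ := hex
    exact ⟨k, by rw [h, hk]; simp⟩

lemma pair_parity {K : ℕ} (μ ν : Fin K → Bool) (k : Fin K) :
    ((eCount μ k + eCount ν k : ℕ) : ZMod 2) =
      (majWeight (xorIdx μ ν) : ZMod 2) + (if xorIdx μ ν k = true then 1 else 0) := by
  push_cast
  rw [eCount_cast, eCount_cast, weight_xor]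
  rw [show xorIdx μ ν k = xor (μ k) (ν k) from rfl]
  rw [ite_xor (μ k) (ν k)]
  ring

lemma triple_parity {K : ℕ} (α β δ : Fin K → Bool) (k : Fin K) :
    ((eCount α k + (eCount β k + eCount δ k) : ℕ) : ZMod 2) =
      (majWeight (xorIdx α (xorIdx β δ)) : ZMod 2) +
        (if xorIdx α (xorIdx β δ) k = true then 1 else 0) := by
  push_cast
  rw [eCount_cast, eCount_cast, eCount_cast, weight_xor, weight_xor]
  rw [show xorIdx α (xorIdx β δ) k = xor (α k) (xor (β k) (δ k)) from rfl]
  rw [ite_xor (α k) (xor (β k) (δ k)), ite_xor (β k) (δ k)]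
  ring

/- ---- matrix layer ---- -/

variable {d K : ℕ} (m : Fin K → Matrix (Fin d) (Fin d) ℂ)


noncomputable def PP (ν : Fin K → Bool) : Matrix (Fin d) (Fin d) ℂ :=
  ((List.finRange K).map (fun j => if ν j then m j else 1)).prod

lemma majMono_def (ν : Fin K → Bool) :
    MajMono m ν = (Complex.I ^ (majWeight ν * (majWeight ν - 1) / 2)) • PP m ν := rfl

section

variable (hsq : ∀ j, m j * m j = 1)
  (hanti : ∀ j k, j ≠ k → m j * m k = -(m k * m j))

include hanti

lemma comm_list (k : Fin K) (ν : Fin K → Bool) (L : List (Fin K)) :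
    m k * (L.map (fun j => if ν j then m j else 1)).prod =
      ((L.map (fun j => if ν j = true ∧ j ≠ k then (-1 : ℂ) else 1)).prod) •
        ((L.map (fun j => if ν j then m j else 1)).prod * m k) := by
  induction L with
  | nil => simp
  | cons a t ih =>
    simp only [List.map_cons, List.prod_cons]
    have hfa : m k * (if ν a then m a else 1) =
        (if ν a = true ∧ a ≠ k then (-1 : ℂ) else 1) • ((if ν a then m a else 1) * m k) := by
      rcases Bool.dichotomy (ν a) with ha | ha
      · simp [ha]
      · by_cases hak : a = k
        · subst hak; simp [ha]
        · simp only [ha, if_true, hak, ne_eq, not_false_iff, and_self, if_pos, true_and]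
          rw [hanti k a fun hh => hak hh.symm]
          simp
    rw [← mul_assoc, hfa, smul_mul_assoc, mul_assoc, ih, mul_smul_comm, smul_smul, ← mul_assoc]

lemma comm_PP (k : Fin K) (ν : Fin K → Bool) :
    m k * PP m ν = ((-1 : ℂ) ^ (eCount ν k)) • (PP m ν * m k) := by
  rw [PP, comm_list m hanti k ν]
  congr 1
  rw [← Fin.prod_univ_def, ← Finset.prod_filter, Finset.prod_const]
  rfl

lemma comm_MajMono (k : Fin K) (ν : Fin K → Bool) :
    m k * MajMono m ν = ((-1 : ℂ) ^ (eCount ν k)) • (MajMono m ν * m k) := by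
  rw [majMono_def, mul_smul_comm, comm_PP m hanti, smul_smul, mul_comm, ← smul_smul,
    smul_mul_assoc]

omit hanti in
include hsq in
lemma trace_zero_of (A : Matrix (Fin d) (Fin d) ℂ) (k : Fin K)
    (hA : m k * A = (-1 : ℂ) • (A * m k)) : A.trace = 0 := by
  have h1 : A.trace = (A * m k * m k).trace := by rw [mul_assoc, hsq k, mul_one]
  have h2 : (A * m k * m k).trace = ((m k * A) * m k).trace := by
    rw [Matrix.trace_mul_comm (A * m k) (m k), ← mul_assoc]
  rw [hA, smul_mul_assoc, Matrix.trace_smul] at h2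
  rw [← h1] at h2
  have h3 : A.trace = (-1 : ℂ) • A.trace := h2
  have h4 : (2 : ℂ) * A.trace = 0 := by
    rw [smul_eq_mul] at h3; linear_combination h3
  have := mul_eq_zero.mp h4
  simpa using this

include hsq in
lemma trace_M2 (hK : (K : ZMod 2) = 0) (μ ν : Fin K → Bool) (hne : μ ≠ ν) :
    (MajMono m μ * MajMono m ν).trace = 0 := by
  have hlam : xorIdx μ ν ≠ fun _ => false := fun hc => hne ((xorIdx_eq_zero_iff μ ν).mp hc)
  obtain ⟨k, hk⟩ := exists_odd hK _ hlam
  refine trace_zero_of m hsq _ k ?_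
  have step : m k * (MajMono m μ * MajMono m ν) =
      ((-1 : ℂ) ^ (eCount μ k + eCount ν k)) • (MajMono m μ * MajMono m ν * m k) := by
    rw [← mul_assoc, comm_MajMono m hanti k μ, smul_mul_assoc, mul_assoc,
      comm_MajMono m hanti k ν, mul_smul_comm, smul_smul, ← pow_add, ← mul_assoc]
  rw [step, neg_one_pow_eq (by rw [pair_parity]; exact hk)]

include hsq in
lemma trace_M3 (hK : (K : ZMod 2) = 0) (α β δ : Fin K → Bool)
    (hlam : xorIdx α (xorIdx β δ) ≠ fun _ => false) :
    (MajMono m α * MajMono m β * MajMono m δ).trace = 0 := by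
  obtain ⟨k, hk⟩ := exists_odd hK _ hlam
  refine trace_zero_of m hsq _ k ?_
  have step : m k * (MajMono m α * MajMono m β * MajMono m δ) =
      ((-1 : ℂ) ^ (eCount α k + eCount β k + eCount δ k)) •
        (MajMono m α * MajMono m β * MajMono m δ * m k) := by
    rw [mul_assoc (MajMono m α), ← mul_assoc (m k), comm_MajMono m hanti k α, smul_mul_assoc,
      mul_assoc (MajMono m α), ← mul_assoc (m k), comm_MajMono m hanti k β, smul_mul_assoc,
      mul_smul_comm, mul_assoc (MajMono m β), comm_MajMono m hanti k δ, mul_smul_comm,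
      mul_smul_comm, smul_smul, smul_smul, ← pow_add, ← pow_add]
    rw [← mul_assoc, ← mul_assoc, ← mul_assoc]
  rw [step, neg_one_pow_eq (by rw [add_assoc, triple_parity]; exact hk)]

lemma swap_list (ν γ : Fin K → Bool) (L : List (Fin K)) :
    (L.map (fun j => if γ j then m j else 1)).prod * PP m ν =
      ((L.map (fun k => if γ k = true then (-1 : ℂ) ^ (eCount ν k) else 1)).prod) •
        (PP m ν * (L.map (fun j => if γ j then m j else 1)).prod) := by
  induction L with
  | nil => simp
  | cons a t ih =>
    simp only [List.map_cons, List.prod_cons]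
    have hfa : (if γ a then m a else 1) * PP m ν =
        (if γ a = true then (-1 : ℂ) ^ (eCount ν a) else 1) •
          (PP m ν * (if γ a then m a else 1)) := by
      rcases Bool.dichotomy (γ a) with h | h
      · simp [h]
      · simp only [h, if_true]
        exact comm_PP m hanti a ν
    rw [mul_assoc, ih, mul_smul_comm, ← mul_assoc, hfa, smul_mul_assoc, smul_smul,
      mul_assoc (PP m ν)]
    congr 1
    ring

lemma swap_PP (γ ν : Fin K → Bool) :
    PP m γ * PP m ν =
      (∏ k, (if γ k = true then (-1 : ℂ) ^ (eCount ν k) else 1)) • (PP m ν * PP m γ) := by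
  have := swap_list m hanti ν γ (List.finRange K)
  rw [Fin.prod_univ_def]
  exact this

omit hanti in
lemma sign_of_antic (γ ν : Fin K → Bool) (hA : anticIdx γ ν = true) :
    (∏ k, (if γ k = true then (-1 : ℂ) ^ (eCount ν k) else 1)) = -1 := by
  rw [← Finset.prod_filter, Finset.prod_pow_eq_pow_sum]
  apply neg_one_pow_eq
  have h2 : ∑ k ∈ Finset.univ.filter (fun k => γ k = true),
      (if ν k = true then (1 : ZMod 2) else 0) = ((majDot γ ν : ℕ) : ZMod 2) := by
    rw [dot_cast, Finset.sum_filter]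
    refine Finset.sum_congr rfl fun j _ => ?_
    by_cases hγ : γ j = true <;> by_cases hν : ν j = true <;> simp [hγ, hν]
  have hcast : ((∑ k ∈ Finset.univ.filter (fun k => γ k = true), eCount ν k : ℕ) : ZMod 2) =
      ((majWeight γ * majWeight ν + majDot γ ν : ℕ) : ZMod 2) := by
    rw [Nat.cast_sum]
    calc ∑ k ∈ Finset.univ.filter (fun k => γ k = true), ((eCount ν k : ℕ) : ZMod 2)
        = ∑ k ∈ Finset.univ.filter (fun k => γ k = true),
            ((majWeight ν : ZMod 2) + (if ν k = true then 1 else 0)) :=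
          Finset.sum_congr rfl fun k _ => eCount_cast ν k
      _ = (Finset.univ.filter (fun k => γ k = true)).card • (majWeight ν : ZMod 2) +
            ((majDot γ ν : ℕ) : ZMod 2) := by
          rw [Finset.sum_add_distrib, Finset.sum_const, h2]
      _ = ((majWeight γ * majWeight ν + majDot γ ν : ℕ) : ZMod 2) := by
          have hcard : (Finset.univ.filter (fun k => γ k = true)).card = majWeight γ := rfl
          rw [hcard, nsmul_eq_mul]
          push_cast
          ring
  rw [hcast]
  exact (anticIdx_iff γ ν).mp hA

lemma antic_swap (γ ν : Fin K → Bool) (hA : anticIdx γ ν = true) :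
    MajMono m γ * MajMono m ν = -(MajMono m ν * MajMono m γ) := by
  rw [majMono_def m γ, majMono_def m ν, smul_mul_assoc, mul_smul_comm, swap_PP m hanti γ ν,
    sign_of_antic γ ν hA]
  rw [smul_smul, smul_smul, smul_mul_assoc, mul_smul_comm, smul_smul, ← neg_smul]
  congr 1
  ring

omit hanti in
lemma anticIdx_xor (γ μ : Fin K → Bool) : anticIdx γ (xorIdx γ μ) = anticIdx γ μ := by
  have hx : ∀ x : ZMod 2, x * x + x = 0 := by decide
  have key : ((majWeight γ * majWeight (xorIdx γ μ) + majDot γ (xorIdx γ μ) : ℕ) : ZMod 2) =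
      ((majWeight γ * majWeight μ + majDot γ μ : ℕ) : ZMod 2) := by
    push_cast
    rw [weight_xor, dot_xor]
    have hself : ((majDot γ γ : ℕ) : ZMod 2) = ((majWeight γ : ℕ) : ZMod 2) := by
      rw [dot_self]
    rw [hself]
    linear_combination hx ((majWeight γ : ZMod 2))
  rw [Bool.eq_iff_iff]
  constructor
  · intro h
    exact (anticIdx_iff γ μ).mpr (key ▸ (anticIdx_iff γ (xorIdx γ μ)).mp h)
  · intro h
    exact (anticIdx_iff γ (xorIdx γ μ)).mpr (key.symm ▸ (anticIdx_iff γ μ).mp h)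

omit hanti in
lemma xorIdx_comm' (a b : Fin K → Bool) : xorIdx a b = xorIdx b a := by
  funext j; simp [xorIdx, Bool.xor_comm]

omit hanti in
lemma ne_lam (γ μ ν : Fin K → Bool) (hxn : xorIdx γ μ ≠ ν) :
    xorIdx γ (xorIdx μ ν) ≠ fun _ => false := by
  intro hc
  apply hxn
  have hg : γ = xorIdx μ ν := (xorIdx_eq_zero_iff _ _).mp hc
  rw [hg, xorIdx_comm' (xorIdx μ ν) μ, xorIdx_cancel]

include hsq in
lemma key (hK : (K : ZMod 2) = 0) (γ : Fin K → Bool) (θ : ℝ) (S : Finset (Fin K → Bool))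
    (μ ν : Fin K → Bool) (hμS : μ ∈ S) (hνS : ν ∈ S) :
    (schrStep m γ θ S μ * MajMono m ν).trace = (MajMono m μ * heisStep m γ θ S ν).trace := by
  unfold schrStep heisStep
  by_cases hA : anticIdx γ μ = true <;> by_cases hB : anticIdx γ ν = true
  · simp only [hA, hB, if_true]
    rw [sub_mul, smul_mul_assoc, smul_mul_assoc, Matrix.trace_sub, Matrix.trace_smul,
      Matrix.trace_smul, mul_add, mul_smul_comm, mul_smul_comm, Matrix.trace_add,
      Matrix.trace_smul, Matrix.trace_smul]
    have h2 : MajMono m μ * MajMono m γ = -(MajMono m γ * MajMono m μ) := by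
      rw [antic_swap m hanti γ μ hA, neg_neg]
    have h1 : MajMono m μ * (MajMono m γ * MajMono m ν) =
        -(MajMono m γ * MajMono m μ * MajMono m ν) := by
      rw [← mul_assoc, h2, neg_mul]
    rw [h1, Matrix.trace_neg]
    have hs : (if xorIdx γ μ ∈ S then (1 : ℂ) else 0) *
          (MajMono m γ * MajMono m μ * MajMono m ν).trace =
        (if xorIdx γ ν ∈ S then (1 : ℂ) else 0) *
          (MajMono m γ * MajMono m μ * MajMono m ν).trace := by
      by_cases hx : xorIdx γ μ = ν
      · have hx2 : xorIdx γ ν = μ := by rw [← hx, xorIdx_cancel]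
        rw [if_pos (hx ▸ hνS), if_pos (hx2 ▸ hμS)]
      · have hT1 : (MajMono m γ * MajMono m μ * MajMono m ν).trace = 0 :=
          trace_M3 m hsq hanti hK γ μ ν (ne_lam γ μ ν hx)
        rw [hT1, mul_zero, mul_zero]
    simp only [smul_eq_mul]
    linear_combination (-(Complex.I * (Real.sin θ : ℂ))) * hs
  · simp only [hA, if_true, if_neg hB]
    have hmn : μ ≠ ν := fun hmv => hB (hmv ▸ hA)
    have hT0 : (MajMono m μ * MajMono m ν).trace = 0 := trace_M2 m hsq hanti hK μ ν hmn
    have hxn : xorIdx γ μ ≠ ν := fun hxv => hB (by rw [← hxv, anticIdx_xor γ μ]; exact hA)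
    have hT1 : (MajMono m γ * MajMono m μ * MajMono m ν).trace = 0 :=
      trace_M3 m hsq hanti hK γ μ ν (ne_lam γ μ ν hxn)
    rw [sub_mul, smul_mul_assoc, smul_mul_assoc, Matrix.trace_sub, Matrix.trace_smul,
      Matrix.trace_smul, mul_assoc, ← mul_assoc (MajMono m γ)] at *
    rw [hT0, hT1]
    simp [hT0]
  · simp only [hB, if_true, if_neg hA]
    have hmn : μ ≠ ν := fun hmv => hA (hmv ▸ hB)
    have hT0 : (MajMono m μ * MajMono m ν).trace = 0 := trace_M2 m hsq hanti hK μ ν hmn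
    have hxn : xorIdx γ ν ≠ μ := fun hxv => hA (by rw [← hxv, anticIdx_xor γ ν]; exact hB)
    have hT1 : (MajMono m μ * (MajMono m γ * MajMono m ν)).trace = 0 := by
      rw [← mul_assoc]
      refine trace_M3 m hsq hanti hK μ γ ν ?_
      intro hc
      exact hxn ((xorIdx_eq_zero_iff _ _).mp hc).symm
    rw [mul_add, mul_smul_comm, mul_smul_comm, Matrix.trace_add, Matrix.trace_smul,
      Matrix.trace_smul, hT0, hT1]
    simp
  · simp only [if_neg hA, if_neg hB]

end
end St19

/-- Equivalence of Heisenberg and Schrödinger truncated propagation: for a retained set `S`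
closed under the branching rules (the observable `H = Σ h_ν M_ν` and state `ρ = Σ r_μ M_μ`
are supported in `S`), the truncated single-gate superoperators are mutually adjoint:
`Tr[T_Schr(ρ) · H] = Tr[ρ · T_Heis(H)]`. -/


theorem stmt19 {N : ℕ} (m : Fin (2 * N) → Matrix (Fin (2 ^ N)) (Fin (2 ^ N)) ℂ)
    (hcl : ∀ j k, m j * m k + m k * m j =
      if j = k then (2 : ℂ) • (1 : Matrix (Fin (2 ^ N)) (Fin (2 ^ N)) ℂ) else 0)
    (γ : Fin (2 * N) → Bool) (θ : ℝ) (S : Finset (Fin (2 * N) → Bool))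
    (h r : (Fin (2 * N) → Bool) → ℝ)
    (hh : ∀ ν, h ν ≠ 0 → ν ∈ S) (hr : ∀ ν, r ν ≠ 0 → ν ∈ S) :
    Matrix.trace ((∑ μ, (r μ : ℂ) • schrStep m γ θ S μ) * (∑ ν, (h ν : ℂ) • MajMono m ν)) =
      Matrix.trace ((∑ μ, (r μ : ℂ) • MajMono m μ) * (∑ ν, (h ν : ℂ) • heisStep m γ θ S ν)) := by
  have hsq : ∀ j, m j * m j = 1 := by
    intro j
    have hj := hcl j j
    rw [if_pos rfl] at hj
    have h2 : (2 : ℂ) • (m j * m j) = (2 : ℂ) • (1 : Matrix (Fin (2 ^ N)) (Fin (2 ^ N)) ℂ) := by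
      rw [two_smul]; exact hj
    exact smul_right_injective _ (by norm_num : (2 : ℂ) ≠ 0) h2
  have hanti : ∀ j k, j ≠ k → m j * m k = -(m k * m j) := by
    intro j k hjk
    have hj := hcl j k
    rw [if_neg hjk] at hj
    exact eq_neg_of_add_eq_zero_left hj
  have hK : ((2 * N : ℕ) : ZMod 2) = 0 := by
    push_cast
    exact mul_eq_zero_of_left (by decide) _
  simp only [Finset.sum_mul, Finset.mul_sum, Matrix.trace_sum]
  refine Finset.sum_congr rfl fun ν _ => ?_
  refine Finset.sum_congr rfl fun μ _ => ?_
  by_cases hrμ : r μ = 0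
  · simp [hrμ]
  by_cases hhν : h ν = 0
  · simp [hhν]
  rw [smul_mul_assoc, mul_smul_comm, smul_mul_assoc, mul_smul_comm, Matrix.trace_smul,
    Matrix.trace_smul, Matrix.trace_smul, Matrix.trace_smul,
    St19.key m hsq hanti hK γ θ S μ ν (hr μ hrμ) (hh ν hhν)]
end
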